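/- Let U ⊆ ℝ be an open set with 2r³ + 1 ≠ 0 for all r ∈ U, let φ(r) = 12^{2/3}·r²/(4r³+2) and ψ(r) = -2·12^{1/3}·r/(2r³+1), and suppose the derivative φ'(r) ≠ 0 for every r ∈ U. Let H : ℝ → ℝ be six times differentiable on an open set V ⊆ ℝ containing φ(U), and suppose H(φ(r)) = ψ(r) for all r ∈ U. Then H satisfies Noth's equation at every point of φ(U): for all t ∈ φ(U), 10·(H''(t))³·H⁽⁶⁾(t) − 70·(H''(t))²·H⁽³⁾(t)·H⁽⁵⁾(t) − 49·(H''(t))²·(H⁽⁴⁾(t))² + 280·H''(t)·(H⁽³⁾(t))²·H⁽⁴⁾(t) − 175·(H⁽³⁾(t))⁴ = 0. -/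

import Mathlib

private lemma hda_cast {f : ℝ → ℝ} {x a b : ℝ} (h : HasDerivAt f a x) (e : a = b) :
    HasDerivAt f b x := e ▸ h

private lemma step_aux {U : Set ℝ} (hU : IsOpen U) {φ G Fk : ℝ → ℝ} {r p q : ℝ}
    (hrU : r ∈ U) (hG : DifferentiableAt ℝ G (φ r))
    (hφd : HasDerivAt φ p r) (hp : p ≠ 0) (hFk : HasDerivAt Fk q r)
    (heq : ∀ s ∈ U, G (φ s) = Fk s) : deriv G (φ r) = q / p := by
  have h1 : HasDerivAt (G ∘ φ) (deriv G (φ r) * p) r := hG.hasDerivAt.comp r hφd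
  have h2 : HasDerivAt Fk (deriv G (φ r) * p) r := by
    refine h1.congr_of_eventuallyEq ?_
    filter_upwards [hU.mem_nhds hrU] with s hs
    exact (heq s hs).symm
  have h3 : deriv G (φ r) * p = q := h2.unique hFk
  rw [eq_div_iff hp]; exact h3

set_option maxHeartbeats 4000000 in
private lemma noth_val (x : ℝ) (hx : x ≠ 0) (hw : x ^ 3 - 12 ≠ 0) :
    10 * (((-3456) + (-2304) * x ^ 3 + (-576) * x ^ 6 + (-64) * x ^ 9 + (-8/3) * x ^ 12) / ((x * (x ^ 3 - 12)) ^ 3)) ^ 3 * (((-1404285820600320) + 156031757844480 * x ^ 6 + (-6501323243520) * x ^ 9 + (-134902457303040) * x ^ 12 + (-241993698508800) * x ^ 15 + (-179508758446080) * x ^ 18 + (-71966036459520) * x ^ 21 + (-17557585920000) * x ^ 24 + (-2734524334080) * x ^ 27 + (-272978657280) * x ^ 30 + (-16833761280) * x ^ 33 + (-582220800) * x ^ 36 + (-9031680) * x ^ 39 + (-35840) * x ^ 42) / ((x * (x ^ 3 - 12)) ^ 11))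
      - 70 * (((-3456) + (-2304) * x ^ 3 + (-576) * x ^ 6 + (-64) * x ^ 9 + (-8/3) * x ^ 12) / ((x * (x ^ 3 - 12)) ^ 3)) ^ 2 * ((1492992 + (-622080) * x ^ 6 + (-276480) * x ^ 9 + (-51840) * x ^ 12 + (-4608) * x ^ 15 + (-160) * x ^ 18) / ((x * (x ^ 3 - 12)) ^ 5)) * ((1083553873920 + (-90296156160) * x ^ 6 + (-91729428480) * x ^ 9 + (-220903096320) * x ^ 12 + (-157122478080) * x ^ 15 + (-53996544000) * x ^ 18 + (-10555453440) * x ^ 21 + (-1225082880) * x ^ 24 + (-81822720) * x ^ 27 + (-2764800) * x ^ 30 + (-32000) * x ^ 33 + (-320/9) * x ^ 36) / ((x * (x ^ 3 - 12)) ^ 9))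
      - 49 * (((-3456) + (-2304) * x ^ 3 + (-576) * x ^ 6 + (-64) * x ^ 9 + (-8/3) * x ^ 12) / ((x * (x ^ 3 - 12)) ^ 3)) ^ 2 * (((-1074954240) + (-283668480) * x ^ 9 + (-179159040) * x ^ 12 + (-48522240) * x ^ 15 + (-6912000) * x ^ 18 + (-518400) * x ^ 21 + (-17280) * x ^ 24 + (-320/3) * x ^ 27) / ((x * (x ^ 3 - 12)) ^ 7)) ^ 2
      + 280 * (((-3456) + (-2304) * x ^ 3 + (-576) * x ^ 6 + (-64) * x ^ 9 + (-8/3) * x ^ 12) / ((x * (x ^ 3 - 12)) ^ 3)) * ((1492992 + (-622080) * x ^ 6 + (-276480) * x ^ 9 + (-51840) * x ^ 12 + (-4608) * x ^ 15 + (-160) * x ^ 18) / ((x * (x ^ 3 - 12)) ^ 5)) ^ 2 * (((-1074954240) + (-283668480) * x ^ 9 + (-179159040) * x ^ 12 + (-48522240) * x ^ 15 + (-6912000) * x ^ 18 + (-518400) * x ^ 21 + (-17280) * x ^ 24 + (-320/3) * x ^ 27) / ((x * (x ^ 3 - 12)) ^ 7))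
      - 175 * ((1492992 + (-622080) * x ^ 6 + (-276480) * x ^ 9 + (-51840) * x ^ 12 + (-4608) * x ^ 15 + (-160) * x ^ 18) / ((x * (x ^ 3 - 12)) ^ 5)) ^ 4 = 0 := by
  simp only [div_eq_mul_inv, ← inv_pow]
  ring

/-- Noth's equation at a point `t` for a function `H`, expressed via iterated derivatives. -/
def NothEqAt (H : ℝ → ℝ) (t : ℝ) : Prop :=
  10 * (iteratedDeriv 2 H t) ^ 3 * iteratedDeriv 6 H t
    - 70 * (iteratedDeriv 2 H t) ^ 2 * iteratedDeriv 3 H t * iteratedDeriv 5 H t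
    - 49 * (iteratedDeriv 2 H t) ^ 2 * (iteratedDeriv 4 H t) ^ 2
    + 280 * iteratedDeriv 2 H t * (iteratedDeriv 3 H t) ^ 2 * iteratedDeriv 4 H t
    - 175 * (iteratedDeriv 3 H t) ^ 4 = 0

set_option maxHeartbeats 4000000 in
/-- The parametrization `(t,H) = (12^(2/3) r²/(4r³+2), -2·12^(1/3) r/(2r³+1))` yields a
solution of Noth's equation. -/
theorem noth_parametrization_recovered_inverted
    (U V : Set ℝ) (hU : IsOpen U) (hUne : ∀ r ∈ U, 2 * r ^ 3 + 1 ≠ (0 : ℝ)) (hV : IsOpen V)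
    (φ ψ H : ℝ → ℝ)
    (hφ : ∀ r : ℝ, φ r = (12 : ℝ) ^ ((2 : ℝ) / 3) * r ^ 2 / (4 * r ^ 3 + 2))
    (hψ : ∀ r : ℝ, ψ r = -(2 * (12 : ℝ) ^ ((1 : ℝ) / 3) * r) / (2 * r ^ 3 + 1))
    (hφ' : ∀ r ∈ U, deriv φ r ≠ 0)
    (hVU : φ '' U ⊆ V)
    (hdiff : ∀ k < 6, ∀ t ∈ V, DifferentiableAt ℝ (iteratedDeriv k H) t)
    (hpar : ∀ r ∈ U, H (φ r) = ψ r) :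
    ∀ t ∈ φ '' U, NothEqAt H t := by
  have h12 : (0:ℝ) < 12 := by norm_num
  set c : ℝ := (12 : ℝ) ^ ((1 : ℝ) / 3) with hcdef
  have hcpos : 0 < c := Real.rpow_pos_of_pos h12 _
  have hcne : c ≠ 0 := ne_of_gt hcpos
  have hc3 : c ^ 3 = 12 := by
    rw [hcdef, ← Real.rpow_natCast ((12:ℝ) ^ ((1:ℝ)/3)) 3, ← Real.rpow_mul h12.le]
    norm_num
  have hc2 : (12 : ℝ) ^ ((2 : ℝ) / 3) = c ^ 2 := by
    rw [hcdef, ← Real.rpow_natCast ((12:ℝ) ^ ((1:ℝ)/3)) 2, ← Real.rpow_mul h12.le]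
    norm_num
  have hD : ∀ s ∈ U, (c * s) ^ 3 + 6 ≠ 0 := by
    intro s hs
    have h := hUne s hs
    have e : (c * s) ^ 3 + 6 = 6 * (2 * s ^ 3 + 1) := by rw [mul_pow, hc3]; ring
    rw [e]
    exact mul_ne_zero (by norm_num) h
  have hφx : ∀ s : ℝ, φ s = 3 * (c * s) ^ 2 / ((c * s) ^ 3 + 6) := by
    intro s
    rw [hφ s, hc2, mul_pow c s 3, hc3, mul_pow c s 2]
    rw [show (12:ℝ) * s ^ 3 + 6 = 3 * (4 * s ^ 3 + 2) by ring]
    exact (mul_div_mul_left (c ^ 2 * s ^ 2) (4 * s ^ 3 + 2) (by norm_num : (3:ℝ) ≠ 0)).symm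
  have hφd : ∀ s ∈ U, HasDerivAt φ (3 * (c*s) * (12 - (c*s) ^ 3) / ((c*s) ^ 3 + 6) ^ 2 * c) s := by
    intro s hs
    have hDs := hD s hs
    have hnum := (hasDerivAt_pow 2 (c*s)).const_mul (3:ℝ)
    have hden := (hasDerivAt_pow 3 (c*s)).add_const (6:ℝ)
    have hq := hnum.div hden hDs
    have hcs : HasDerivAt (fun s' : ℝ => c * s') (c * 1) s := (hasDerivAt_id s).const_mul c
    have h2 := hq.comp s hcs
    refine hda_cast (h2.congr_of_eventuallyEq (Filter.Eventually.of_forall hφx)) ?_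
    beta_reduce
    push_cast
    ring
  have hpne : ∀ s ∈ U, 3 * (c*s) * (12 - (c*s) ^ 3) / ((c*s) ^ 3 + 6) ^ 2 * c ≠ 0 := by
    intro s hs
    exact (hφd s hs).deriv ▸ hφ' s hs
  have hx0 : ∀ s ∈ U, c * s ≠ 0 := by
    intro s hs h0
    apply hpne s hs
    rw [h0]; norm_num
  have hwne : ∀ s ∈ U, (c * s) ^ 3 - 12 ≠ 0 := by
    intro s hs h0
    apply hpne s hs
    rw [show (12:ℝ) - (c*s) ^ 3 = -((c*s) ^ 3 - 12) by ring, h0]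
    norm_num
  have h12w : ∀ s ∈ U, (12:ℝ) - (c * s) ^ 3 ≠ 0 := by
    intro s hs h0
    apply hwne s hs
    linarith
  have hA0 : ∀ s ∈ U, iteratedDeriv 0 H (φ s) = -12 * (c*s) / ((c*s) ^ 3 + 6) := by
    intro s hs
    rw [iteratedDeriv_zero, hpar s hs, hψ s]
    rw [div_eq_div_iff (hUne s hs) (hD s hs)]
    linear_combination (-2*s^4*c) * hc3
  have hA1 : ∀ s ∈ U, iteratedDeriv 1 H (φ s) = (24 + (-8) * (c*s) ^ 3) / (((c*s) * ((c*s) ^ 3 - 12)) ^ 1) := by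
    intro s hs
    have hxne := hx0 s hs
    have hwne' := hwne s hs
    have hDs := hD s hs
    have h12x := h12w s hs
    have hnum := (hasDerivAt_id (c*s)).const_mul (-12 : ℝ)
    have hden := (hasDerivAt_pow 3 (c*s)).add_const (6:ℝ)
    have hq := hnum.div hden (hDs)
    have hcs : HasDerivAt (fun s' : ℝ => c * s') (c * 1) s := (hasDerivAt_id s).const_mul c
    have hprev := hq.comp s hcs
    have hstep := step_aux hU hs (hdiff 0 (by norm_num) (φ s) (hVU ⟨s, hs, rfl⟩))
      (hφd s hs) (hpne s hs) hprev (fun u hu => hA0 u hu)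
    have e : iteratedDeriv 1 H = deriv (iteratedDeriv 0 H) := by
      rw [show (1:ℕ) = 0+1 from rfl]; exact iteratedDeriv_succ
    rw [e, hstep]
    beta_reduce
    push_cast
    simp only [Pi.mul_apply, Pi.pow_apply, Pi.add_apply, Pi.sub_apply, Pi.div_apply, id, pow_one]
    rw [div_eq_div_iff (hpne s hs) (mul_ne_zero hxne hwne')]
    field_simp [hxne, hwne', h12x, hDs, hcne]
    ring
  have hA2 : ∀ s ∈ U, iteratedDeriv 2 H (φ s) = ((-3456) + (-2304) * (c*s) ^ 3 + (-576) * (c*s) ^ 6 + (-64) * (c*s) ^ 9 + (-8/3) * (c*s) ^ 12) / (((c*s) * ((c*s) ^ 3 - 12)) ^ 3) := by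
    intro s hs
    have hxne := hx0 s hs
    have hwne' := hwne s hs
    have hDs := hD s hs
    have h12x := h12w s hs
    have hnum := ((hasDerivAt_const (c*s) (24 : ℝ)).add ((hasDerivAt_pow 3 (c*s)).const_mul ((-8) : ℝ)))
    have hden := ((hasDerivAt_id (c*s)).mul ((hasDerivAt_pow 3 (c*s)).sub_const (12:ℝ))).pow 1
    have hq := hnum.div hden (pow_ne_zero _ (mul_ne_zero hxne hwne'))
    have hcs : HasDerivAt (fun s' : ℝ => c * s') (c * 1) s := (hasDerivAt_id s).const_mul c
    have hprev := hq.comp s hcs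
    have hstep := step_aux hU hs (hdiff 1 (by norm_num) (φ s) (hVU ⟨s, hs, rfl⟩))
      (hφd s hs) (hpne s hs) hprev (fun u hu => hA1 u hu)
    have e : iteratedDeriv 2 H = deriv (iteratedDeriv 1 H) := by
      rw [show (2:ℕ) = 1+1 from rfl]; exact iteratedDeriv_succ
    rw [e, hstep]
    beta_reduce
    push_cast
    simp only [Pi.mul_apply, Pi.pow_apply, Pi.add_apply, Pi.sub_apply, Pi.div_apply, id]
    rw [show (12:ℝ) - (c*s) ^ 3 = -((c*s) ^ 3 - 12) by ring]
    field_simp [hxne, hwne', h12x, hDs, hcne]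
    ring
  have hA3 : ∀ s ∈ U, iteratedDeriv 3 H (φ s) = (1492992 + (-622080) * (c*s) ^ 6 + (-276480) * (c*s) ^ 9 + (-51840) * (c*s) ^ 12 + (-4608) * (c*s) ^ 15 + (-160) * (c*s) ^ 18) / (((c*s) * ((c*s) ^ 3 - 12)) ^ 5) := by
    intro s hs
    have hxne := hx0 s hs
    have hwne' := hwne s hs
    have hDs := hD s hs
    have h12x := h12w s hs
    have hnum := (((((hasDerivAt_const (c*s) (-3456 : ℝ)).add ((hasDerivAt_pow 3 (c*s)).const_mul ((-2304) : ℝ))).add ((hasDerivAt_pow 6 (c*s)).const_mul ((-576) : ℝ))).add ((hasDerivAt_pow 9 (c*s)).const_mul ((-64) : ℝ))).add ((hasDerivAt_pow 12 (c*s)).const_mul ((-8/3) : ℝ)))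
    have hden := ((hasDerivAt_id (c*s)).mul ((hasDerivAt_pow 3 (c*s)).sub_const (12:ℝ))).pow 3
    have hq := hnum.div hden (pow_ne_zero _ (mul_ne_zero hxne hwne'))
    have hcs : HasDerivAt (fun s' : ℝ => c * s') (c * 1) s := (hasDerivAt_id s).const_mul c
    have hprev := hq.comp s hcs
    have hstep := step_aux hU hs (hdiff 2 (by norm_num) (φ s) (hVU ⟨s, hs, rfl⟩))
      (hφd s hs) (hpne s hs) hprev (fun u hu => hA2 u hu)
    have e : iteratedDeriv 3 H = deriv (iteratedDeriv 2 H) := by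
      rw [show (3:ℕ) = 2+1 from rfl]; exact iteratedDeriv_succ
    rw [e, hstep]
    beta_reduce
    push_cast
    simp only [Pi.mul_apply, Pi.pow_apply, Pi.add_apply, Pi.sub_apply, Pi.div_apply, id]
    rw [show (12:ℝ) - (c*s) ^ 3 = -((c*s) ^ 3 - 12) by ring]
    field_simp [hxne, hwne', h12x, hDs, hcne]
    ring
  have hA4 : ∀ s ∈ U, iteratedDeriv 4 H (φ s) = ((-1074954240) + (-283668480) * (c*s) ^ 9 + (-179159040) * (c*s) ^ 12 + (-48522240) * (c*s) ^ 15 + (-6912000) * (c*s) ^ 18 + (-518400) * (c*s) ^ 21 + (-17280) * (c*s) ^ 24 + (-320/3) * (c*s) ^ 27) / (((c*s) * ((c*s) ^ 3 - 12)) ^ 7) := by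
    intro s hs
    have hxne := hx0 s hs
    have hwne' := hwne s hs
    have hDs := hD s hs
    have h12x := h12w s hs
    have hnum := ((((((hasDerivAt_const (c*s) (1492992 : ℝ)).add ((hasDerivAt_pow 6 (c*s)).const_mul ((-622080) : ℝ))).add ((hasDerivAt_pow 9 (c*s)).const_mul ((-276480) : ℝ))).add ((hasDerivAt_pow 12 (c*s)).const_mul ((-51840) : ℝ))).add ((hasDerivAt_pow 15 (c*s)).const_mul ((-4608) : ℝ))).add ((hasDerivAt_pow 18 (c*s)).const_mul ((-160) : ℝ)))
    have hden := ((hasDerivAt_id (c*s)).mul ((hasDerivAt_pow 3 (c*s)).sub_const (12:ℝ))).pow 5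
    have hq := hnum.div hden (pow_ne_zero _ (mul_ne_zero hxne hwne'))
    have hcs : HasDerivAt (fun s' : ℝ => c * s') (c * 1) s := (hasDerivAt_id s).const_mul c
    have hprev := hq.comp s hcs
    have hstep := step_aux hU hs (hdiff 3 (by norm_num) (φ s) (hVU ⟨s, hs, rfl⟩))
      (hφd s hs) (hpne s hs) hprev (fun u hu => hA3 u hu)
    have e : iteratedDeriv 4 H = deriv (iteratedDeriv 3 H) := by
      rw [show (4:ℕ) = 3+1 from rfl]; exact iteratedDeriv_succ
    rw [e, hstep]
    beta_reduce
    push_cast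
    simp only [Pi.mul_apply, Pi.pow_apply, Pi.add_apply, Pi.sub_apply, Pi.div_apply, id]
    rw [show (12:ℝ) - (c*s) ^ 3 = -((c*s) ^ 3 - 12) by ring]
    field_simp [hxne, hwne', h12x, hDs, hcne]
    ring
  have hA5 : ∀ s ∈ U, iteratedDeriv 5 H (φ s) = (1083553873920 + (-90296156160) * (c*s) ^ 6 + (-91729428480) * (c*s) ^ 9 + (-220903096320) * (c*s) ^ 12 + (-157122478080) * (c*s) ^ 15 + (-53996544000) * (c*s) ^ 18 + (-10555453440) * (c*s) ^ 21 + (-1225082880) * (c*s) ^ 24 + (-81822720) * (c*s) ^ 27 + (-2764800) * (c*s) ^ 30 + (-32000) * (c*s) ^ 33 + (-320/9) * (c*s) ^ 36) / (((c*s) * ((c*s) ^ 3 - 12)) ^ 9) := by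
    intro s hs
    have hxne := hx0 s hs
    have hwne' := hwne s hs
    have hDs := hD s hs
    have h12x := h12w s hs
    have hnum := ((((((((hasDerivAt_const (c*s) (-1074954240 : ℝ)).add ((hasDerivAt_pow 9 (c*s)).const_mul ((-283668480) : ℝ))).add ((hasDerivAt_pow 12 (c*s)).const_mul ((-179159040) : ℝ))).add ((hasDerivAt_pow 15 (c*s)).const_mul ((-48522240) : ℝ))).add ((hasDerivAt_pow 18 (c*s)).const_mul ((-6912000) : ℝ))).add ((hasDerivAt_pow 21 (c*s)).const_mul ((-518400) : ℝ))).add ((hasDerivAt_pow 24 (c*s)).const_mul ((-17280) : ℝ))).add ((hasDerivAt_pow 27 (c*s)).const_mul ((-320/3) : ℝ)))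
    have hden := ((hasDerivAt_id (c*s)).mul ((hasDerivAt_pow 3 (c*s)).sub_const (12:ℝ))).pow 7
    have hq := hnum.div hden (pow_ne_zero _ (mul_ne_zero hxne hwne'))
    have hcs : HasDerivAt (fun s' : ℝ => c * s') (c * 1) s := (hasDerivAt_id s).const_mul c
    have hprev := hq.comp s hcs
    have hstep := step_aux hU hs (hdiff 4 (by norm_num) (φ s) (hVU ⟨s, hs, rfl⟩))
      (hφd s hs) (hpne s hs) hprev (fun u hu => hA4 u hu)
    have e : iteratedDeriv 5 H = deriv (iteratedDeriv 4 H) := by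
      rw [show (5:ℕ) = 4+1 from rfl]; exact iteratedDeriv_succ
    rw [e, hstep]
    beta_reduce
    push_cast
    simp only [Pi.mul_apply, Pi.pow_apply, Pi.add_apply, Pi.sub_apply, Pi.div_apply, id]
    rw [show (12:ℝ) - (c*s) ^ 3 = -((c*s) ^ 3 - 12) by ring]
    field_simp [hxne, hwne', h12x, hDs, hcne]
    ring
  have hA6 : ∀ s ∈ U, iteratedDeriv 6 H (φ s) = ((-1404285820600320) + 156031757844480 * (c*s) ^ 6 + (-6501323243520) * (c*s) ^ 9 + (-134902457303040) * (c*s) ^ 12 + (-241993698508800) * (c*s) ^ 15 + (-179508758446080) * (c*s) ^ 18 + (-71966036459520) * (c*s) ^ 21 + (-17557585920000) * (c*s) ^ 24 + (-2734524334080) * (c*s) ^ 27 + (-272978657280) * (c*s) ^ 30 + (-16833761280) * (c*s) ^ 33 + (-582220800) * (c*s) ^ 36 + (-9031680) * (c*s) ^ 39 + (-35840) * (c*s) ^ 42) / (((c*s) * ((c*s) ^ 3 - 12)) ^ 11) := by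
    intro s hs
    have hxne := hx0 s hs
    have hwne' := hwne s hs
    have hDs := hD s hs
    have h12x := h12w s hs
    have hnum := ((((((((((((hasDerivAt_const (c*s) (1083553873920 : ℝ)).add ((hasDerivAt_pow 6 (c*s)).const_mul ((-90296156160) : ℝ))).add ((hasDerivAt_pow 9 (c*s)).const_mul ((-91729428480) : ℝ))).add ((hasDerivAt_pow 12 (c*s)).const_mul ((-220903096320) : ℝ))).add ((hasDerivAt_pow 15 (c*s)).const_mul ((-157122478080) : ℝ))).add ((hasDerivAt_pow 18 (c*s)).const_mul ((-53996544000) : ℝ))).add ((hasDerivAt_pow 21 (c*s)).const_mul ((-10555453440) : ℝ))).add ((hasDerivAt_pow 24 (c*s)).const_mul ((-1225082880) : ℝ))).add ((hasDerivAt_pow 27 (c*s)).const_mul ((-81822720) : ℝ))).add ((hasDerivAt_pow 30 (c*s)).const_mul ((-2764800) : ℝ))).add ((hasDerivAt_pow 33 (c*s)).const_mul ((-32000) : ℝ))).add ((hasDerivAt_pow 36 (c*s)).const_mul ((-320/9) : ℝ)))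
    have hden := ((hasDerivAt_id (c*s)).mul ((hasDerivAt_pow 3 (c*s)).sub_const (12:ℝ))).pow 9
    have hq := hnum.div hden (pow_ne_zero _ (mul_ne_zero hxne hwne'))
    have hcs : HasDerivAt (fun s' : ℝ => c * s') (c * 1) s := (hasDerivAt_id s).const_mul c
    have hprev := hq.comp s hcs
    have hstep := step_aux hU hs (hdiff 5 (by norm_num) (φ s) (hVU ⟨s, hs, rfl⟩))
      (hφd s hs) (hpne s hs) hprev (fun u hu => hA5 u hu)
    have e : iteratedDeriv 6 H = deriv (iteratedDeriv 5 H) := by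
      rw [show (6:ℕ) = 5+1 from rfl]; exact iteratedDeriv_succ
    rw [e, hstep]
    beta_reduce
    push_cast
    simp only [Pi.mul_apply, Pi.pow_apply, Pi.add_apply, Pi.sub_apply, Pi.div_apply, id]
    rw [show (12:ℝ) - (c*s) ^ 3 = -((c*s) ^ 3 - 12) by ring]
    field_simp [hxne, hwne', h12x, hDs, hcne]
    ring
  intro t ht
  obtain ⟨r, hr, rfl⟩ := ht
  unfold NothEqAt
  rw [hA2 r hr, hA3 r hr, hA4 r hr, hA5 r hr, hA6 r hr]
  exact noth_val (c*r) (hx0 r hr) (hwne r hr)
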